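/- Let I = {0,1} and let A be the affine Cartan matrix of type A_2^{(2)} (with node 0 long and node 1 short): a_{00} = a_{11} = 2, a_{01} = -1, a_{10} = -4; set q_0 = p^4 and q_1 = p. Define z_1 = x_0^{-1} x_1^2 (so that y_0 = z_1^{-2} and y_1 = z_1). Then the pair φ_0 = {ı·p^{-3}·z_1}_0·{ı·p^{-1}·z_1}_0 and φ_1 = (ı/(p − p^{-1}))·{ı·p·z_1}_1 satisfies the shiftability system for A. -/

import Mathlib

noncomputable section

/-- The Laurent polynomial algebra `ℂ[x_i^{±1} : i ∈ ι]`, realized as the group algebra of the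
free abelian group `ι → ℤ` over `ℂ` (for `ι` finite this is `ℤ^ι`). -/
abbrev LaurentAlg (ι : Type*) : Type _ := AddMonoidAlgebra ℂ (ι → ℤ)

/-- The monomial `∏_i x_i^{μ i}`. -/
def mono {ι : Type*} (μ : ι → ℤ) : LaurentAlg ι := AddMonoidAlgebra.single μ 1

lemma mono_zero {ι : Type*} : mono (0 : ι → ℤ) = 1 := rfl

lemma mono_add {ι : Type*} (μ ν : ι → ℤ) : mono (μ + ν) = mono μ * mono ν := by
  simp [mono, AddMonoidAlgebra.single_mul_single]

/-- The auxiliary monoid homomorphism `μ ↦ c^{-μ i} · x^μ` underlying `ζ_i`. -/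
def zetaHom {ι : Type*} (c : ℂˣ) (i : ι) : Multiplicative (ι → ℤ) →* LaurentAlg ι where
  toFun μ := ((c ^ (-(Multiplicative.toAdd μ i)) : ℂˣ) : ℂ) • mono (Multiplicative.toAdd μ)
  map_one' := by
    simp [mono_zero]
  map_mul' μ ν := by
    show ((c ^ (-(Multiplicative.toAdd (μ * ν) i)) : ℂˣ) : ℂ) • mono (Multiplicative.toAdd (μ * ν)) = _
    have h : Multiplicative.toAdd (μ * ν) = Multiplicative.toAdd μ + Multiplicative.toAdd ν := rfl
    rw [h, mono_add, Pi.add_apply, neg_add, zpow_add, Units.val_mul, mul_smul,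
      smul_mul_assoc, mul_smul_comm]

/-- The `ℂ`-algebra endomorphism `ζ_i` of the Laurent polynomial algebra determined by
`ζ_i(x_j) = c^{-δ_{ij}} x_j` (its inverse automorphism is `zeta c⁻¹ i`). -/
def zeta {ι : Type*} (c : ℂˣ) (i : ι) : LaurentAlg ι →ₐ[ℂ] LaurentAlg ι :=
  AddMonoidAlgebra.lift ℂ (LaurentAlg ι) (ι → ℤ) (zetaHom c i)

/-- The element `{u}_s = (u - u⁻¹)/(s - s⁻¹)` for the unit `u = c · x^μ` of the Laurent
polynomial algebra (whose inverse is `c⁻¹ · x^{-μ}`). -/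
def brk {ι : Type*} (s c : ℂ) (μ : ι → ℤ) : LaurentAlg ι :=
  ((s - s⁻¹)⁻¹ : ℂ) • (c • mono μ - c⁻¹ • mono (-μ))

/-- The shiftability system (4.1) for the integer matrix `a` with parameters `q i`:
`ζ_i(φ_i) − φ_i = {y_i}_i` for all `i`, and `φ_i φ_j = ζ_j^{-1}(φ_i)·ζ_i^{-1}(φ_j)` for `i ≠ j`,
where `y_i = ∏_j x_j^{a j i}`. -/
def ShiftSystem {ι : Type*} (a : ι → ι → ℤ) (q : ι → ℂˣ) (φ : ι → LaurentAlg ι) : Prop :=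
  (∀ i, zeta (q i) i (φ i) - φ i = brk ((q i : ℂ)) 1 (fun j => a j i)) ∧
  (∀ i j, i ≠ j → φ i * φ j = zeta (q j)⁻¹ j (φ i) * zeta (q i)⁻¹ i (φ j))

/-- The exponent vector of the single variable `x_k`. -/
def xvec {ι : Type*} [DecidableEq ι] (k : ι) : ι → ℤ := fun j => if j = k then 1 else 0

end

noncomputable section

open Complex

variable {ι : Type*}

lemma mono_mul (μ ν : ι → ℤ) : mono μ * mono ν = mono (μ + ν) := (mono_add μ ν).symm

lemma zeta_mono (c : ℂˣ) (i : ι) (μ : ι → ℤ) :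
    zeta c i (mono μ) = ((c : ℂ) ^ (-(μ i))) • mono μ := by
  simp [zeta, mono, AddMonoidAlgebra.lift_single, zetaHom, Units.val_zpow_eq_zpow_val]

lemma zeta_brk (c : ℂˣ) (i : ι) (s d : ℂ) (μ : ι → ℤ) :
    zeta c i (brk s d μ) = brk s ((c : ℂ) ^ (-(μ i)) * d) μ := by
  simp only [brk, map_smul, map_sub, zeta_mono, Pi.neg_apply, neg_neg, smul_smul,
    mul_inv, zpow_neg, inv_inv]
  match_scalars <;> ring

lemma brk_mul_brk (s t c d : ℂ) (μ : ι → ℤ) :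
    brk s c μ * brk t d μ = ((s - s⁻¹)⁻¹ * (t - t⁻¹)⁻¹) •
      ((c * d) • mono (μ + μ) - (c * d⁻¹ + c⁻¹ * d) • (1 : LaurentAlg ι)
        + (c⁻¹ * d⁻¹) • mono (-μ + -μ)) := by
  simp only [brk, smul_sub, sub_mul, mul_sub, smul_mul_assoc, mul_smul_comm, mono_mul,
    add_neg_cancel, neg_add_cancel, mono_zero]
  match_scalars <;> ring

lemma brk3 (s t u c d e : ℂ) (μ : ι → ℤ) :
    brk s c μ * brk t d μ * brk u e μ = ((s - s⁻¹)⁻¹ * (t - t⁻¹)⁻¹ * (u - u⁻¹)⁻¹) •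
      ((c * d * e) • mono (μ + μ + μ) - (c * d * e⁻¹ + c * d⁻¹ * e + c⁻¹ * d * e) • mono μ
        + (c⁻¹ * d⁻¹ * e + c⁻¹ * d * e⁻¹ + c * d⁻¹ * e⁻¹) • mono (-μ)
        - (c⁻¹ * d⁻¹ * e⁻¹) • mono (-μ + -μ + -μ)) := by
  rw [brk_mul_brk]
  simp only [brk, smul_sub, sub_mul, mul_sub, add_mul, smul_mul_assoc, mul_smul_comm,
    mono_mul, one_mul, smul_add, add_smul,
    add_neg_cancel_right, neg_add_cancel_right, add_neg_cancel, neg_add_cancel, mono_zero]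
  match_scalars <;> ring


set_option maxHeartbeats 2000000 in
/-- For the affine Cartan matrix of type `A_2^{(2)}` (indexed by `Fin 2`,
node `0` long, node `1` short, `a_{01} = -1`, `a_{10} = -4`, `q_0 = p⁴`, `q_1 = p`),
with `z_1 = x_0⁻¹x_1²`, the pair `φ_0 = {ı p⁻³ z_1}_0·{ı p⁻¹ z_1}_0`,
`φ_1 = (ı/(p−p⁻¹))·{ı p z_1}_1` solves the shiftability system. -/
theorem shiftability_A22_aff (p : ℂˣ) (hp : ∀ m : ℕ, 0 < m → p ^ m ≠ 1) :
    ShiftSystem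
      (fun i j : Fin 2 => if i = j then 2 else if i = 0 then -1 else -4)
      (fun i : Fin 2 => if i = 0 then p ^ 4 else p)
      ![brk ((p : ℂ) ^ 4) (Complex.I * (p : ℂ)⁻¹ ^ 3) (xvec 1 + xvec 1 - xvec 0) *
          brk ((p : ℂ) ^ 4) (Complex.I * (p : ℂ)⁻¹) (xvec 1 + xvec 1 - xvec 0),
        (Complex.I * ((p : ℂ) - (p : ℂ)⁻¹)⁻¹) •
          brk (p : ℂ) (Complex.I * (p : ℂ)) (xvec 1 + xvec 1 - xvec 0)] := by
  have hp0 : (p : ℂ) ≠ 0 := p.ne_zero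
  have hkey : ∀ m : ℕ, 0 < m → (p : ℂ) ^ m ≠ 1 := fun m hm h =>
    hp m hm (Units.ext (by push_cast; exact h))
  have hq2 : (p:ℂ)^2 - 1 ≠ 0 := sub_ne_zero.mpr (hkey 2 (by norm_num))
  have hq8 : (p:ℂ)^8 - 1 ≠ 0 := sub_ne_zero.mpr (hkey 8 (by norm_num))
  have hq2' : (-1 : ℂ) + (p:ℂ)^2 ≠ 0 := by
    intro h; exact hq2 (by linear_combination h)
  have hq8' : (-1 : ℂ) + (p:ℂ)^8 ≠ 0 := by
    intro h; exact hq8 (by linear_combination h)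
  have hD0 : (p:ℂ) ^ 18 - (p:ℂ) ^ 20 * 2 + ((p:ℂ) ^ 22 - (p:ℂ) ^ 26 * 2) + ((p:ℂ) ^ 28 * 4 - (p:ℂ) ^ 30 * 2) + ((p:ℂ) ^ 34 - (p:ℂ) ^ 36 * 2) + (p:ℂ) ^ 38 ≠ 0 := by
    intro h
    exact mul_ne_zero (mul_ne_zero (pow_ne_zero 18 hp0) (pow_ne_zero 2 hq2)) (pow_ne_zero 2 hq8) (by linear_combination h)
  have hD1 : (p:ℂ) ^ 21 - (p:ℂ) ^ 23 * 2 + ((p:ℂ) ^ 25 - (p:ℂ) ^ 29 * 2) + ((p:ℂ) ^ 31 * 4 - (p:ℂ) ^ 33 * 2) + ((p:ℂ) ^ 37 - (p:ℂ) ^ 39 * 2) + (p:ℂ) ^ 41 ≠ 0 := by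
    intro h
    exact mul_ne_zero (mul_ne_zero (pow_ne_zero 21 hp0) (pow_ne_zero 2 hq2)) (pow_ne_zero 2 hq8) (by linear_combination h)
  have hD2 : (p:ℂ) ^ 4 - (p:ℂ) ^ 6 * 2 + ((p:ℂ) ^ 8 - (p:ℂ) ^ 12 * 2) + ((p:ℂ) ^ 14 * 4 - (p:ℂ) ^ 16 * 2) + ((p:ℂ) ^ 20 - (p:ℂ) ^ 22 * 2) + (p:ℂ) ^ 24 ≠ 0 := by
    intro h
    exact mul_ne_zero (mul_ne_zero (pow_ne_zero 4 hp0) (pow_ne_zero 2 hq2)) (pow_ne_zero 2 hq8) (by linear_combination h)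
  have hD3 : (p:ℂ) ^ 5 - (p:ℂ) ^ 7 * 2 + ((p:ℂ) ^ 9 - (p:ℂ) ^ 13 * 2) + ((p:ℂ) ^ 15 * 4 - (p:ℂ) ^ 17 * 2) + ((p:ℂ) ^ 21 - (p:ℂ) ^ 23 * 2) + (p:ℂ) ^ 25 ≠ 0 := by
    intro h
    exact mul_ne_zero (mul_ne_zero (pow_ne_zero 5 hp0) (pow_ne_zero 2 hq2)) (pow_ne_zero 2 hq8) (by linear_combination h)
  have hD4 : (p:ℂ) ^ 6 - (p:ℂ) ^ 8 * 2 + ((p:ℂ) ^ 10 - (p:ℂ) ^ 14 * 2) + ((p:ℂ) ^ 16 * 4 - (p:ℂ) ^ 18 * 2) + ((p:ℂ) ^ 22 - (p:ℂ) ^ 24 * 2) + (p:ℂ) ^ 26 ≠ 0 := by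
    intro h
    exact mul_ne_zero (mul_ne_zero (pow_ne_zero 6 hp0) (pow_ne_zero 2 hq2)) (pow_ne_zero 2 hq8) (by linear_combination h)
  have hD5 : (p:ℂ) ^ 8 - (p:ℂ) ^ 10 * 2 + ((p:ℂ) ^ 12 - (p:ℂ) ^ 16 * 2) + ((p:ℂ) ^ 18 * 4 - (p:ℂ) ^ 20 * 2) + ((p:ℂ) ^ 24 - (p:ℂ) ^ 26 * 2) + (p:ℂ) ^ 28 ≠ 0 := by
    intro h
    exact mul_ne_zero (mul_ne_zero (pow_ne_zero 8 hp0) (pow_ne_zero 2 hq2)) (pow_ne_zero 2 hq8) (by linear_combination h)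
  have hD6 : (p:ℂ) ^ 9 - (p:ℂ) ^ 11 * 2 + ((p:ℂ) ^ 13 - (p:ℂ) ^ 17 * 2) + ((p:ℂ) ^ 19 * 4 - (p:ℂ) ^ 21 * 2) + ((p:ℂ) ^ 25 - (p:ℂ) ^ 27 * 2) + (p:ℂ) ^ 29 ≠ 0 := by
    intro h
    exact mul_ne_zero (mul_ne_zero (pow_ne_zero 9 hp0) (pow_ne_zero 2 hq2)) (pow_ne_zero 2 hq8) (by linear_combination h)
  have hI3 : Complex.I ^ 3 = -Complex.I := by rw [pow_succ, Complex.I_sq]; ring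
  have hI4 : Complex.I ^ 4 = 1 := by rw [show (4:ℕ) = 2*2 from rfl, pow_mul, Complex.I_sq]; ring
  have hI5 : Complex.I ^ 5 = Complex.I := by rw [pow_succ, hI4]; ring
  have hI6 : Complex.I ^ 6 = -1 := by rw [pow_succ, hI5, Complex.I_mul_I]
  have hI7 : Complex.I ^ 7 = -Complex.I := by rw [pow_succ, hI6]; ring
  have hI8 : Complex.I ^ 8 = 1 := by rw [show (8:ℕ)=2*4 from rfl, pow_mul, Complex.I_sq]; ring
  have e1 : ((p:ℂ) - (p:ℂ)⁻¹)⁻¹ = (p:ℂ) * ((p:ℂ)^2 - 1)⁻¹ := by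
    have h : (p:ℂ) - (p:ℂ)⁻¹ = ((p:ℂ)^2 - 1) * (p:ℂ)⁻¹ := by field_simp
    rw [h, mul_inv, inv_inv]; ring
  have e4 : ((p:ℂ)^4 - ((p:ℂ)^4)⁻¹)⁻¹ = (p:ℂ)^4 * ((p:ℂ)^8 - 1)⁻¹ := by
    have h : (p:ℂ)^4 - ((p:ℂ)^4)⁻¹ = ((p:ℂ)^8 - 1) * ((p:ℂ)^4)⁻¹ := by
      field_simp
    rw [h, mul_inv, inv_inv]; ring
  set μ : Fin 2 → ℤ := xvec 1 + xvec 1 - xvec 0 with hμdef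
  have hμ0 : μ 0 = -1 := by simp [hμdef, xvec]
  have hμ1 : μ 1 = 2 := by simp [hμdef, xvec]
  constructor
  · intro i
    fin_cases i
    · simp only [Fin.zero_eta, Fin.isValue, Matrix.cons_val_zero, if_pos rfl, if_true]
      have ha0 : (fun j : Fin 2 => if j = 0 then (2:ℤ) else if j = 0 then -1 else -4)
          = -μ + -μ := by
        funext j; fin_cases j <;> simp [hμdef, xvec]
      rw [ha0, map_mul, zeta_brk, zeta_brk, brk_mul_brk, brk_mul_brk]
      simp only [hμ0, brk, Units.val_pow_eq_pow_val, neg_neg, zpow_one, neg_add, mul_inv,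
        Complex.inv_I, inv_pow, inv_inv, inv_one, one_smul, e1, e4]
      match_scalars <;>
      · field_simp
        try ring_nf
        try simp only [Complex.I_sq, hI3, hI4, hI5, hI6, hI7, hI8]
        try field_simp
        try ring_nf
        try simp only [Complex.I_sq, hI3, hI4, hI5, hI6, hI7, hI8]
        try ring
    · simp only [Fin.mk_one, Fin.isValue, Matrix.cons_val_one, Matrix.head_cons, Matrix.cons_val_zero,
        if_neg (by decide : ¬(1 : Fin 2) = 0)]
      have ha1 : (fun j : Fin 2 => if j = 1 then (2:ℤ) else if j = 0 then -1 else -4) = μ := by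
        funext j; fin_cases j <;> simp [hμdef, xvec]
      rw [ha1, map_smul, zeta_brk]
      simp only [hμ1, brk, smul_sub, smul_smul, zpow_neg, zpow_two, mul_inv,
        Complex.inv_I, inv_inv, inv_one, one_smul, e1, e4]
      match_scalars <;>
      · field_simp
        try ring_nf
        try simp only [Complex.I_sq, hI3, hI4, hI5, hI6, hI7, hI8]
        try field_simp
        try ring_nf
        try simp only [Complex.I_sq, hI3, hI4, hI5, hI6, hI7, hI8]
        try ring
  · intro i j hij
    fin_cases i <;> fin_cases j <;> simp only [Fin.zero_eta, Fin.mk_one] at hij ⊢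
    · exact absurd rfl hij
    · simp only [Fin.isValue, Matrix.cons_val_zero, Matrix.cons_val_one, Matrix.head_cons,
        if_pos rfl, if_neg (by decide : ¬(1 : Fin 2) = 0)]
      rw [mul_smul_comm, map_mul, map_smul, zeta_brk, zeta_brk, zeta_brk, mul_smul_comm,
        brk3, brk3]
      simp only [hμ0, hμ1, Units.val_inv_eq_inv_val, Units.val_pow_eq_pow_val, neg_neg,
        zpow_one, zpow_neg, zpow_two, mul_inv, Complex.inv_I, inv_pow, inv_inv, if_true, reduceIte, Units.val_pow_eq_pow_val, e1, e4]
      match_scalars <;>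
      · field_simp
        try ring_nf
        try simp only [Complex.I_sq, hI3, hI4, hI5, hI6, hI7, hI8]
        try field_simp
        try ring_nf
        try simp only [Complex.I_sq, hI3, hI4, hI5, hI6, hI7, hI8]
        try ring
    · simp only [Fin.isValue, Matrix.cons_val_zero, Matrix.cons_val_one, Matrix.head_cons,
        if_pos rfl, if_neg (by decide : ¬(1 : Fin 2) = 0)]
      rw [smul_mul_assoc, ← mul_assoc, map_smul, zeta_brk, map_mul, zeta_brk, zeta_brk,
        smul_mul_assoc, ← mul_assoc, brk3, brk3]
      simp only [hμ0, hμ1, Units.val_inv_eq_inv_val, Units.val_pow_eq_pow_val, neg_neg,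
        zpow_one, zpow_neg, zpow_two, mul_inv, Complex.inv_I, inv_pow, inv_inv, if_true, reduceIte, Units.val_pow_eq_pow_val, e1, e4]
      match_scalars <;>
      · field_simp
        try ring_nf
        try simp only [Complex.I_sq, hI3, hI4, hI5, hI6, hI7, hI8]
        try field_simp
        try ring_nf
        try simp only [Complex.I_sq, hI3, hI4, hI5, hI6, hI7, hI8]
        try ring
    · exact absurd rfl hij

end
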